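/- Let p be a prime with p ≡ 1 or 7 (mod 8) and let (a_p, b_p) be the minimal positive solution of a² - 2b² = p. Then a_p satisfies min(2a_p² - p, 6a_p² - 4√2·a_p·√(a_p² - p) - 3p) ≤ 2√2·p; in particular, the squared minimum of the lattice of the prime ideal (a_p + b_p√2) of ℤ[√2] under the canonical embedding, which equals 2·min(2a_p² - p, 2a_{-p}² + p), is at most 4√2·p. -/
import Mathlib


theorem shortest_vector_upper_bound_Zsqrt2
    (p : ℕ) (hp : p.Prime) (hp18 : p % 8 = 1 ∨ p % 8 = 7)
    (a b : ℤ) (ha : 0 < a) (hb : 0 < b) (hab : a ^ 2 - 2 * b ^ 2 = (p : ℤ))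
    (hmin : ∀ a' b' : ℤ, 0 < a' → 0 < b' → a' ^ 2 - 2 * b' ^ 2 = (p : ℤ) → a ≤ a') :
    min (2 * (a : ℝ) ^ 2 - p)
        (6 * (a : ℝ) ^ 2 - 4 * Real.sqrt 2 * a * Real.sqrt ((a : ℝ) ^ 2 - p) - 3 * p)
      ≤ 2 * Real.sqrt 2 * p ∧
    2 * min (2 * (a : ℝ) ^ 2 - p) (2 * ((a : ℝ) - 2 * b) ^ 2 + p)
      ≤ 4 * Real.sqrt 2 * p := by
  have hp0 : (0:ℤ) < (p:ℤ) := by exact_mod_cast hp.pos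
  -- 3b < 2a
  have key1 : ¬ (2*a < 3*b) := by
    intro h
    have h34 : 4*b < 3*a := by nlinarith
    have := hmin (3*a-4*b) (3*b-2*a) (by linarith) (by linarith) (by linear_combination hab)
    linarith
  have key2 : 2*a ≠ 3*b := by
    intro h
    have hb2 : b^2 = 4*(p:ℤ) := by nlinarith
    have hpi : Prime ((p:ℤ)) := Nat.prime_iff_prime_int.mp hp
    have hdvd : (p:ℤ) ∣ b := hpi.dvd_of_dvd_pow (n := 2) ⟨4, by linarith⟩
    obtain ⟨k, hk⟩ := hdvd
    have hk4 : (p:ℤ) * k^2 = 4 := by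
      have h2 : (p:ℤ) * ((p:ℤ) * k^2) = (p:ℤ) * 4 := by nlinarith
      exact mul_left_cancel₀ (ne_of_gt hp0) h2
    have h4 : (p:ℤ) ∣ 4 := ⟨k^2, hk4.symm⟩
    have h4' : p ∣ 4 := by exact_mod_cast h4
    have hple : p ≤ 4 := Nat.le_of_dvd (by norm_num) h4'
    have := hp.two_le
    interval_cases p <;> revert hp hp18 <;> decide
  have h3b : 3*b < 2*a := by
    rcases lt_trichotomy (2*a) (3*b) with h|h|h
    · exact absurd h key1
    · exact absurd h key2
    · exact h
  have h34 : 4*b < 3*a := by nlinarith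
  have ha2b : 2*b ≤ a := by
    have := hmin (3*a-4*b) (2*a-3*b) (by linarith) (by linarith) (by linear_combination hab)
    linarith
  have ha2p : a^2 ≤ 2*(p:ℤ) := by nlinarith
  -- to the reals
  have hAp : (0:ℝ) < (a:ℝ) := by exact_mod_cast ha
  have hBp : (0:ℝ) < (b:ℝ) := by exact_mod_cast hb
  have hPp : (0:ℝ) < (p:ℝ) := by exact_mod_cast hp0
  have habR : (a:ℝ)^2 - 2*(b:ℝ)^2 = (p:ℝ) := by exact_mod_cast hab
  have ha2bR : 2*(b:ℝ) ≤ (a:ℝ) := by exact_mod_cast ha2b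
  have ha2pR : (a:ℝ)^2 ≤ 2*(p:ℝ) := by exact_mod_cast ha2p
  have hs2 : Real.sqrt 2 * Real.sqrt 2 = 2 := Real.mul_self_sqrt (by norm_num)
  have hs1 : (1:ℝ) ≤ Real.sqrt 2 := by nlinarith [Real.sqrt_nonneg 2]
  have hsqrt : Real.sqrt ((a:ℝ)^2 - (p:ℝ)) = Real.sqrt 2 * (b:ℝ) := by
    have h1 : (a:ℝ)^2 - (p:ℝ) = (Real.sqrt 2 * (b:ℝ))^2 := by
      have : (Real.sqrt 2 * (b:ℝ))^2 = 2*(b:ℝ)^2 := by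
        rw [mul_pow]; rw [sq, hs2]
      linarith
    rw [h1, Real.sqrt_sq (by positivity)]
  have hmain : min (2 * (a : ℝ) ^ 2 - p) (2 * ((a : ℝ) - 2 * b) ^ 2 + p)
      ≤ 2 * Real.sqrt 2 * p := by
    by_cases hcase : 2*a^2 ≤ 3*(p:ℤ)
    · have hcR : 2*(a:ℝ)^2 ≤ 3*(p:ℝ) := by exact_mod_cast hcase
      refine le_trans (min_le_left _ _) ?_
      nlinarith
    · push_neg at hcase
      have hcR : 3*(p:ℝ) < 2*(a:ℝ)^2 := by exact_mod_cast hcase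
      refine le_trans (min_le_right _ _) ?_
      have ht0 : (0:ℝ) ≤ (a:ℝ) - 2*(b:ℝ) := by linarith
      have heq : ((a:ℝ) - 2*(b:ℝ))*((a:ℝ) + 2*(b:ℝ)) = 2*(p:ℝ) - (a:ℝ)^2 := by
        linear_combination 2 * habR
      have htA : ((a:ℝ) - 2*(b:ℝ))*(a:ℝ) ≤ (p:ℝ)/2 := by
        nlinarith [mul_nonneg ht0 hBp.le]
      have hkey : 2*((a:ℝ) - 2*(b:ℝ))^2 ≤ (p:ℝ) := by
        nlinarith [mul_nonneg ht0 hAp.le, sq_nonneg (((a:ℝ) - 2*(b:ℝ))*(a:ℝ))]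
      nlinarith
  constructor
  · have hrw : 6 * (a : ℝ) ^ 2 - 4 * Real.sqrt 2 * a * Real.sqrt ((a : ℝ) ^ 2 - p) - 3 * p
        = 2 * ((a : ℝ) - 2 * b) ^ 2 + p := by
      rw [hsqrt]
      linear_combination (-4*(a:ℝ)*(b:ℝ)) * hs2 + 4 * habR
    rw [hrw]
    exact hmain
  · linarith [hmain]
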